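/- Let T : C(X,ℂ) → C(Y,ℂ) be a bijective map between the sup-normed Banach algebras of continuous complex-valued functions on compact Hausdorff spaces X and Y, satisfying ‖T(f+g)‖ = ‖T(f)+T(g)‖, ‖T(fg)‖ = ‖T(f)T(g)‖, and T(conj f) = conj(T f) for all f, g. Then the map T₀ defined by T₀(f) = T(1)·T(f) is a surjective real-linear isometry from C(X,ℂ) onto C(Y,ℂ). -/

import Mathlib

set_option linter.unusedSectionVars false
set_option maxHeartbeats 1000000

namespace Stmt14Aux

open Filter Topology

variable {X Y : Type*} [TopologicalSpace X] [CompactSpace X] [T2Space X]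
  [TopologicalSpace Y] [CompactSpace Y] [T2Space Y]

lemma normMulStar {Z : Type*} [TopologicalSpace Z] [CompactSpace Z] [T2Space Z]
    (h : C(Z,ℂ)) : ‖h * star h‖ = ‖h‖ * ‖h‖ := by
  rw [mul_comm]; exact CStarRing.norm_star_mul_self

lemma selfAdjApply {Z : Type*} [TopologicalSpace Z] (u : C(Z,ℂ)) (hu : star u = u) (x : Z) :
    u x = ((u x).re : ℂ) := by
  have h0 := congrArg (fun (w : C(Z,ℂ)) => w x) hu
  simp only [ContinuousMap.star_apply, Complex.star_def] at h0
  have h2 := congrArg Complex.im h0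
  simp only [Complex.conj_im] at h2
  exact Complex.ext rfl (by simp only [Complex.ofReal_im]; linarith)

lemma circle_mul (a b : ℝ) :
    (((a:ℂ) + (b:ℂ)*Complex.I) * star ((a:ℂ) + (b:ℂ)*Complex.I)) = ((a^2 + b^2 : ℝ) : ℂ) := by
  have hs : star ((a:ℂ) + (b:ℂ)*Complex.I) = (a:ℂ) - (b:ℂ)*Complex.I := by
    simp [Complex.star_def, map_add, map_mul, Complex.conj_ofReal, Complex.conj_I]
    ring
  rw [hs]
  push_cast
  ring_nf
  rw [Complex.I_sq]
  ring

variable (T : C(X, ℂ) → C(Y, ℂ))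

lemma Tzero (h1 : ∀ f g : C(X, ℂ), ‖T (f + g)‖ = ‖T f + T g‖) : T 0 = 0 := by
  have h := h1 0 0
  rw [add_zero] at h
  have h2 : ‖T 0 + T 0‖ = 2 * ‖T 0‖ := by rw [← two_smul ℝ (T 0), norm_smul]; simp
  rw [h2] at h
  have : ‖T 0‖ = 0 := by linarith
  simpa [norm_eq_zero] using this

lemma Tneg (h1 : ∀ f g : C(X, ℂ), ‖T (f + g)‖ = ‖T f + T g‖) (f : C(X,ℂ)) :
    T (-f) = - T f := by
  have h := h1 f (-f)
  rw [add_neg_cancel, Tzero T h1, norm_zero] at h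
  have h' : T f + T (-f) = 0 := by simpa [norm_eq_zero] using h.symm
  linear_combination h'

lemma Tdist (h1 : ∀ f g : C(X, ℂ), ‖T (f + g)‖ = ‖T f + T g‖) (f g : C(X,ℂ)) :
    ‖T f - T g‖ = ‖T (f - g)‖ := by
  rw [sub_eq_add_neg f g, h1 f (-g), Tneg T h1 g, ← sub_eq_add_neg]

lemma Tsq (h2 : ∀ f g : C(X, ℂ), ‖T (f * g)‖ = ‖T f * T g‖)
    (h3 : ∀ f : C(X, ℂ), T (star f) = star (T f)) (f : C(X,ℂ)) :
    ‖T (f * star f)‖ = ‖T f‖ * ‖T f‖ := by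
  rw [h2 f (star f), h3 f, normMulStar]

lemma Tdouble (h1 : ∀ f g : C(X, ℂ), ‖T (f + g)‖ = ‖T f + T g‖) (f : C(X,ℂ)) :
    ‖T ((2:ℝ) • f)‖ = 2 * ‖T f‖ := by
  rw [two_smul, h1 f f, ← two_smul ℝ (T f), norm_smul]
  simp

lemma Tnat (h1 : ∀ f g : C(X, ℂ), ‖T (f + g)‖ = ‖T f + T g‖) :
    ∀ (n : ℕ) (f : C(X,ℂ)), ‖T ((n:ℝ) • f)‖ = n * ‖T f‖ := by
  intro n
  induction n using Nat.strong_induction_on with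
  | _ n ih =>
    match n with
    | 0 => intro f; simp [Tzero T h1]
    | 1 => intro f; simp
    | (k+2) => {
        intro f
        have ih1 := ih (k+1) (by omega) f
        have ih0 := ih k (by omega) f
        have hsub : ((k+2:ℕ):ℝ) • f - ((k+1:ℕ):ℝ) • f = f := by
          rw [← sub_smul]; push_cast; norm_num
        have hup : ‖T (((k+2:ℕ):ℝ) • f)‖ ≤ ((k+2:ℕ):ℝ) * ‖T f‖ := by
          have htri : ‖T (((k+2:ℕ):ℝ) • f)‖ ≤
              ‖T (((k+2:ℕ):ℝ) • f) - T (((k+1:ℕ):ℝ) • f)‖ + ‖T (((k+1:ℕ):ℝ) • f)‖ := by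
            calc ‖T (((k+2:ℕ):ℝ) • f)‖ = ‖(T (((k+2:ℕ):ℝ) • f) - T (((k+1:ℕ):ℝ) • f)) + T (((k+1:ℕ):ℝ) • f)‖ := by ring_nf
              _ ≤ _ := norm_add_le _ _
          rw [Tdist T h1, hsub, ih1] at htri
          push_cast at htri ⊢
          linarith [norm_nonneg (T f)]
        have hdouble : ‖T ((2:ℝ) • (((k+1:ℕ):ℝ) • f))‖ = 2 * (((k+1:ℕ):ℝ) * ‖T f‖) := by
          rw [Tdouble T h1, ih1]
        have hsplit : (2:ℝ) • (((k+1:ℕ):ℝ) • f) = ((k+2:ℕ):ℝ) • f + ((k:ℕ):ℝ) • f := by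
          rw [smul_smul, ← add_smul]; push_cast; ring_nf
        have hlow : 2 * (((k+1:ℕ):ℝ) * ‖T f‖) ≤ ‖T (((k+2:ℕ):ℝ) • f)‖ + ((k:ℕ):ℝ) * ‖T f‖ := by
          rw [← hdouble, hsplit, h1]
          calc ‖T (((k+2:ℕ):ℝ) • f) + T (((k:ℕ):ℝ) • f)‖
              ≤ ‖T (((k+2:ℕ):ℝ) • f)‖ + ‖T (((k:ℕ):ℝ) • f)‖ := norm_add_le _ _
            _ = ‖T (((k+2:ℕ):ℝ) • f)‖ + ((k:ℕ):ℝ) * ‖T f‖ := by rw [ih0]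
        push_cast at hlow hup ⊢
        linarith }

lemma ToneNorm (hbij : Function.Bijective T)
    (h2 : ∀ f g : C(X, ℂ), ‖T (f * g)‖ = ‖T f * T g‖)
    (h3 : ∀ f : C(X, ℂ), T (star f) = star (T f))
    (hT0 : T 0 = 0) (h01 : (0:C(X,ℂ)) ≠ 1) : ‖T 1‖ = 1 := by
  have hstar1 : star (T 1) = T 1 := by
    have := h3 1; rw [star_one] at this; exact this.symm
  have hsq : ‖T 1‖ = ‖T 1‖ * ‖T 1‖ := by
    calc ‖T 1‖ = ‖T (1 * 1)‖ := by rw [one_mul]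
      _ = ‖T 1 * T 1‖ := h2 1 1
      _ = ‖star (T 1) * T 1‖ := by rw [hstar1]
      _ = ‖T 1‖ * ‖T 1‖ := CStarRing.norm_star_mul_self
  have hne : T 1 ≠ 0 := fun hc => h01 (hbij.injective (by rw [hT0, hc]))
  have hne' : ‖T 1‖ ≠ 0 := fun hc => hne (norm_eq_zero.mp hc)
  exact (mul_left_cancel₀ hne' ((mul_one ‖T 1‖).trans hsq)).symm

lemma Tconst (hnat : ∀ (n : ℕ) (f : C(X,ℂ)), ‖T ((n:ℝ) • f)‖ = n * ‖T f‖)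
    (hTone : ‖T 1‖ = 1) (q : ℚ) (hq : 0 ≤ q) : ‖T ((q:ℝ) • 1)‖ = q := by
  have hd : ((q.den:ℝ)) ≠ 0 := Nat.cast_ne_zero.mpr q.den_pos.ne'
  have hnum : ((q.num.toNat:ℕ):ℝ) = ((q.num:ℤ):ℝ) := by
    exact_mod_cast congrArg (Int.cast : ℤ → ℝ) (Int.toNat_of_nonneg (Rat.num_nonneg.mpr hq))
  have hkey : ((q.den:ℝ)) • ((q:ℝ) • (1:C(X,ℂ))) = ((q.num.toNat : ℕ):ℝ) • 1 := by
    rw [smul_smul]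
    congr 1
    rw [hnum, Rat.cast_def]
    field_simp
  have e1 := hnat q.den ((q:ℝ) • (1:C(X,ℂ)))
  rw [hkey, hnat q.num.toNat 1, hTone, mul_one, hnum] at e1
  have hv : ‖T ((q:ℝ) • 1)‖ = (q.num:ℝ)/(q.den:ℝ) := by
    field_simp
    linarith [e1]
  rw [hv, Rat.cast_def]

lemma TleSelfAdj
    (h1 : ∀ f g : C(X, ℂ), ‖T (f + g)‖ = ‖T f + T g‖)
    (h3 : ∀ f : C(X, ℂ), T (star f) = star (T f))
    (hTsq : ∀ f : C(X,ℂ), ‖T (f * star f)‖ = ‖T f‖ * ‖T f‖)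
    (hdouble : ∀ f : C(X,ℂ), ‖T ((2:ℝ) • f)‖ = 2 * ‖T f‖)
    (hconst : ∀ q : ℚ, 0 ≤ q → ‖T ((q:ℝ) • 1)‖ = q)
    (u : C(X,ℂ)) (hu : star u = u) : ‖T u‖ ≤ ‖u‖ := by
  have main : ∀ q : ℚ, ‖u‖ < q → ‖T u‖ ≤ q := by
    intro q hq
    have hq0 : (0:ℝ) < q := lt_of_le_of_lt (norm_nonneg u) hq
    have hb : ∀ x : X, ((u x).re)^2 ≤ (q:ℝ)^2 := by
      intro x
      have ha1 : |(u x).re| ≤ ‖u x‖ := Complex.abs_re_le_norm (u x)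
      have ha2 : ‖u x‖ ≤ ‖u‖ := u.norm_coe_le_norm x
      have : |(u x).re| ≤ (q:ℝ) := by linarith
      calc ((u x).re)^2 = |(u x).re|^2 := (sq_abs _).symm
        _ ≤ (q:ℝ)^2 := by
            apply pow_le_pow_left₀ (abs_nonneg _) this
    have hwcont : Continuous (fun x : X => Real.sqrt ((q:ℝ)^2 - ((u x).re)^2)) := by
      apply Real.continuous_sqrt.comp
      exact continuous_const.sub ((Complex.continuous_re.comp u.continuous).pow 2)
    set w : C(X,ℝ) := ⟨fun x => Real.sqrt ((q:ℝ)^2 - ((u x).re)^2), hwcont⟩ with hw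
    have hzcont : Continuous (fun x : X => (((u x).re:ℂ) + ((w x :ℝ):ℂ) * Complex.I)) := by
      apply Continuous.add
      · exact Complex.continuous_ofReal.comp (Complex.continuous_re.comp u.continuous)
      · exact (Complex.continuous_ofReal.comp w.continuous).mul continuous_const
    set z : C(X,ℂ) := ⟨fun x => ((u x).re:ℂ) + ((w x:ℝ):ℂ) * Complex.I, hzcont⟩ with hz
    have hz1 : z + star z = u + u := by
      ext x
      simp only [ContinuousMap.add_apply, ContinuousMap.star_apply, hz, ContinuousMap.coe_mk,
        Complex.star_def]
      rw [selfAdjApply u hu x]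
      simp [Complex.ext_iff]
    have hz2 : z * star z = ((q*q:ℚ):ℝ) • 1 := by
      ext x
      simp only [ContinuousMap.mul_apply, ContinuousMap.star_apply, hz, ContinuousMap.coe_mk,
        ContinuousMap.smul_apply, ContinuousMap.one_apply, smul_eq_mul, mul_one]
      rw [circle_mul]
      have hsq : ((q:ℝ)^2 - ((u x).re)^2) ≥ 0 := by linarith [hb x]
      have : Real.sqrt ((q:ℝ)^2 - ((u x).re)^2) ^ 2 = (q:ℝ)^2 - ((u x).re)^2 :=
        Real.sq_sqrt hsq
      rw [hw]
      simp only [ContinuousMap.coe_mk]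
      rw [this, Complex.real_smul, mul_one]
      push_cast
      ring
    have hTz : ‖T z‖ = q := by
      have e1 := hTsq z
      rw [hz2, hconst (q*q) (mul_self_nonneg q)] at e1
      push_cast at e1
      nlinarith [norm_nonneg (T z), hq0]
    have h2u : ‖T (u + u)‖ ≤ 2*q := by
      rw [← hz1, h1 z (star z), h3 z]
      calc ‖T z + star (T z)‖ ≤ ‖T z‖ + ‖star (T z)‖ := norm_add_le _ _
        _ = 2*q := by rw [norm_star, hTz]; ring
    have hdb := hdouble u
    rw [two_smul] at hdb
    linarith [h2u, hdb]
  by_contra hc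
  push_neg at hc
  obtain ⟨q, hq1, hq2⟩ := exists_rat_btwn hc
  exact absurd (main q hq1) (by linarith)

lemma TleAll
    (hTsq : ∀ f : C(X,ℂ), ‖T (f * star f)‖ = ‖T f‖ * ‖T f‖)
    (hle : ∀ u : C(X,ℂ), star u = u → ‖T u‖ ≤ ‖u‖)
    (f : C(X,ℂ)) : ‖T f‖ ≤ ‖f‖ := by
  have hsa : star (f * star f) = f * star f := by
    rw [star_mul, star_star, mul_comm]
  have h := hTsq f
  have h2 := hle _ hsa
  rw [normMulStar] at h2
  nlinarith [norm_nonneg (T f), norm_nonneg f]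

lemma Tphase
    (hTsq : ∀ f : C(X,ℂ), ‖T (f * star f)‖ = ‖T f‖ * ‖T f‖)
    (ω : ℂ) (hω : ‖ω‖ = 1) (f : C(X,ℂ)) : ‖T (ω • f)‖ = ‖T f‖ := by
  have key : (ω • f) * star (ω • f) = f * star f := by
    rw [star_smul, smul_mul_smul]
    have : ω * star ω = 1 := by
      rw [Complex.star_def, Complex.mul_conj, Complex.normSq_eq_norm_sq, hω]
      norm_num
    rw [this, one_smul]
  have e1 := hTsq (ω • f)
  have e2 := hTsq f
  rw [key, e2] at e1
  nlinarith [norm_nonneg (T (ω • f)), norm_nonneg (T f)]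

lemma TrealLe (hX : Nonempty X)
    (h2 : ∀ f g : C(X, ℂ), ‖T (f * g)‖ = ‖T f * T g‖)
    (hle : ∀ u : C(X,ℂ), star u = u → ‖T u‖ ≤ ‖u‖)
    (t : ℝ) (ht : 0 < t) (f : C(X,ℂ)) : ‖T (t • f)‖ ≤ t * ‖T f‖ := by
  have hfactor : t • f = (t • (1:C(X,ℂ))) * f := by
    rw [smul_mul_assoc, one_mul]
  have hsa : star (t • (1:C(X,ℂ))) = t • 1 := by
    rw [star_smul, star_one, star_trivial]
  have hnorm1 : ‖t • (1:C(X,ℂ))‖ = t := by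
    haveI := hX
    rw [norm_smul, norm_one, mul_one, Real.norm_eq_abs, abs_of_pos ht]
  calc ‖T (t • f)‖ = ‖T (t • (1:C(X,ℂ))) * T f‖ := by rw [hfactor, h2]
    _ ≤ ‖T (t • (1:C(X,ℂ)))‖ * ‖T f‖ := norm_mul_le _ _
    _ ≤ ‖t • (1:C(X,ℂ))‖ * ‖T f‖ := by
        apply mul_le_mul_of_nonneg_right (hle _ hsa) (norm_nonneg _)
    _ = t * ‖T f‖ := by rw [hnorm1]

lemma Thom (hT0 : T 0 = 0)
    (hrle : ∀ t : ℝ, 0 < t → ∀ f : C(X,ℂ), ‖T (t • f)‖ ≤ t * ‖T f‖)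
    (hphase : ∀ ω : ℂ, ‖ω‖ = 1 → ∀ f : C(X,ℂ), ‖T (ω • f)‖ = ‖T f‖)
    (z : ℂ) (f : C(X,ℂ)) : ‖T (z • f)‖ = ‖z‖ * ‖T f‖ := by
  rcases eq_or_ne z 0 with rfl | hz
  · simp [hT0]
  · have hzn : (0:ℝ) < ‖z‖ := norm_pos_iff.mpr hz
    have hreq : ∀ t : ℝ, 0 < t → ∀ g : C(X,ℂ), ‖T (t • g)‖ = t * ‖T g‖ := by
      intro t ht g
      refine le_antisymm (hrle t ht g) ?_
      have h := hrle t⁻¹ (inv_pos.mpr ht) (t • g)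
      rw [inv_smul_smul₀ ht.ne' g] at h
      have h2 := mul_le_mul_of_nonneg_left h ht.le
      calc t * ‖T g‖ ≤ t * (t⁻¹ * ‖T (t • g)‖) := h2
        _ = ‖T (t • g)‖ := by field_simp
    set ω : ℂ := ‖z‖⁻¹ • z with hωdef
    have hω : ‖ω‖ = 1 := by
      rw [hωdef, norm_smul, norm_inv, norm_norm]
      exact inv_mul_cancel₀ hzn.ne'
    have hdecomp : z • f = (‖z‖ : ℝ) • (ω • f) := by
      rw [← smul_assoc, hωdef, smul_smul, mul_inv_cancel₀ hzn.ne', one_smul]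
    rw [hdecomp, hreq ‖z‖ hzn (ω • f), hphase ω hω f]

lemma Teval (hbij : Function.Bijective T)
    (h1 : ∀ f g : C(X, ℂ), ‖T (f + g)‖ = ‖T f + T g‖)
    (h2 : ∀ f g : C(X, ℂ), ‖T (f * g)‖ = ‖T f * T g‖)
    (hT0 : T 0 = 0) (hTone : ‖T 1‖ = 1)
    (hdist : ∀ f g : C(X,ℂ), ‖T f - T g‖ = ‖T (f - g)‖)
    (hneg : ∀ f : C(X,ℂ), T (-f) = -T f)
    (hhom : ∀ (z:ℂ) (f : C(X,ℂ)), ‖T (z • f)‖ = ‖z‖ * ‖T f‖)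
    (f : C(X,ℂ)) (x : X) : ‖f x‖ ≤ ‖T f‖ := by
  by_contra hc
  push_neg at hc
  have ha0 : f x ≠ 0 := by
    intro h
    rw [h, norm_zero] at hc
    exact absurd hc (not_lt.mpr (norm_nonneg _))
  set g : C(X,ℂ) := (f x)⁻¹ • f with hg
  have hgx : g x = 1 := by
    rw [hg]
    simp only [ContinuousMap.smul_apply, smul_eq_mul]
    exact inv_mul_cancel₀ ha0
  set r := ‖T g‖ with hr
  have hr0 : (0:ℝ) ≤ r := norm_nonneg _
  have hr1 : r < 1 := by
    rw [hr, hg, hhom, norm_inv]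
    rw [inv_mul_lt_one₀ (norm_pos_iff.mpr ha0)]
    exact hc
  have hpow : ∀ k : ℕ, ‖T (g ^ k)‖ ≤ r ^ k := by
    intro k
    induction k with
    | zero => simp [pow_zero, hTone]
    | succ n ih =>
        rw [pow_succ, h2]
        calc ‖T (g^n) * T g‖ ≤ ‖T (g^n)‖ * ‖T g‖ := norm_mul_le _ _
          _ ≤ r^n * r := mul_le_mul_of_nonneg_right ih hr0
          _ = r^(n+1) := (pow_succ r n).symm
  set p : ℕ → C(X,ℂ) := fun n => ∑ i ∈ Finset.range (n+1), g^i with hp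
  have hgeom : ∀ n, (1 - g) * p n = 1 - g^(n+1) := by
    intro n
    have hgs := geom_sum_mul g (n+1)
    calc (1-g) * p n = -((p n) * (g - 1)) := by ring
      _ = -(g^(n+1) - 1) := by rw [hp]; rw [hgs]
      _ = 1 - g^(n+1) := by ring
  have hcauchy : CauchySeq (fun n => T (p n)) := by
    apply cauchySeq_of_le_geometric r r hr1
    intro n
    rw [dist_eq_norm, hdist]
    have hdiff : p n - p (n+1) = -(g^(n+1)) := by
      rw [hp]
      simp only [Finset.sum_range_succ]
      ring
    rw [hdiff, hneg, norm_neg]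
    calc ‖T (g^(n+1))‖ ≤ r^(n+1) := hpow (n+1)
      _ = r * r^n := by rw [pow_succ]; ring
  obtain ⟨Q, hQ⟩ := cauchySeq_tendsto_of_complete hcauchy
  set P := (Equiv.ofBijective T hbij).symm Q with hPdef
  have hTP : T P = Q := (Equiv.ofBijective T hbij).apply_symm_apply Q
  have hbound : ∀ n, ‖T ((1-g) * P - 1)‖ ≤ ‖T (1-g)‖ * ‖T (P - p n)‖ + r^(n+1) := by
    intro n
    have hsplitEq : (1-g) * P - 1 = ((1-g) * (P - p n)) + (-(g^(n+1))) := by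
      have hge := hgeom n
      linear_combination hge
    rw [hsplitEq, h1]
    calc ‖T ((1-g)*(P - p n)) + T (-(g^(n+1)))‖
        ≤ ‖T ((1-g)*(P - p n))‖ + ‖T (-(g^(n+1)))‖ := norm_add_le _ _
      _ ≤ ‖T (1-g)‖ * ‖T (P - p n)‖ + r^(n+1) := by
          apply add_le_add
          · rw [h2]; exact norm_mul_le _ _
          · rw [hneg, norm_neg]; exact hpow (n+1)
  have htend : Tendsto (fun n => ‖T (1-g)‖ * ‖T (P - p n)‖ + r^(n+1)) atTop (𝓝 0) := by
    have t1 : Tendsto (fun n => ‖T (P - p n)‖) atTop (𝓝 0) := by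
      have heq : ∀ n, ‖T (P - p n)‖ = ‖T (p n) - Q‖ := by
        intro n
        rw [← hdist, hTP, norm_sub_rev]
      simp_rw [heq]
      have h0 : Tendsto (fun n => T (p n) - Q) atTop (𝓝 (Q - Q)) :=
        hQ.sub tendsto_const_nhds
      rw [sub_self] at h0
      simpa using h0.norm
    have t2 : Tendsto (fun n : ℕ => r^(n+1)) atTop (𝓝 0) := by
      have := tendsto_pow_atTop_nhds_zero_of_lt_one hr0 hr1
      exact this.comp (tendsto_add_atTop_nat 1)
    have := (t1.const_mul ‖T (1-g)‖).add t2
    simpa using this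
  have hfin : ‖T ((1-g) * P - 1)‖ ≤ 0 :=
    ge_of_tendsto htend (Filter.Eventually.of_forall hbound)
  have hzero : (1-g) * P - 1 = 0 := by
    have h0 : T ((1-g)*P - 1) = 0 := by
      have := le_antisymm hfin (norm_nonneg _)
      exact norm_eq_zero.mp this
    exact hbij.injective (h0.trans hT0.symm)
  have heval := congrArg (fun (w : C(X,ℂ)) => w x) hzero
  simp only [ContinuousMap.sub_apply, ContinuousMap.mul_apply, ContinuousMap.one_apply,
    ContinuousMap.zero_apply, hgx] at heval
  simp at heval

lemma Tunimod (hbij : Function.Bijective T)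
    (h2 : ∀ f g : C(X, ℂ), ‖T (f * g)‖ = ‖T f * T g‖)
    (hTone : ‖T 1‖ = 1) (y : Y) : ‖T 1 y‖ = 1 := by
  have hub : ‖T 1 y‖ ≤ 1 := by
    calc ‖T 1 y‖ ≤ ‖T 1‖ := (T 1).norm_coe_le_norm y
      _ = 1 := hTone
  refine le_antisymm hub ?_
  by_contra hlt
  push_neg at hlt
  set ε : ℝ := (1 - ‖T 1 y‖)/2 with hεdef
  have hε : 0 < ε := by simp only [hεdef]; linarith
  have hε2 : ε ≤ 1/2 := by
    simp only [hεdef]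
    have := norm_nonneg (T 1 y)
    linarith
  set U : Set Y := {v : Y | ‖T 1 v‖ < 1 - ε} with hUdef
  have hyU : y ∈ U := by
    simp only [hUdef, Set.mem_setOf_eq, hεdef]
    linarith
  have hUopen : IsOpen U := isOpen_lt ((map_continuous (T 1)).norm) continuous_const
  obtain ⟨k, hk0, hk1, hk01⟩ := exists_continuous_zero_one_of_isClosed
    (hUopen.isClosed_compl) (isClosed_singleton (x := y))
    (by
      rw [Set.disjoint_left]
      intro a haU hay
      rw [Set.mem_singleton_iff] at hay
      exact haU (hay ▸ hyU))
  have hhcont : Continuous (fun v : Y => ((k v : ℝ):ℂ)) :=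
    Complex.continuous_ofReal.comp k.continuous
  set h : C(Y,ℂ) := ⟨fun v => ((k v : ℝ):ℂ), hhcont⟩ with hhdef
  have hnh : ‖h‖ = 1 := by
    refine le_antisymm ?_ ?_
    · rw [ContinuousMap.norm_le _ (by norm_num : (0:ℝ) ≤ 1)]
      intro v
      have := hk01 v
      simp only [hhdef, ContinuousMap.coe_mk, Complex.norm_real, Real.norm_eq_abs]
      rw [abs_le]
      constructor <;> [linarith [this.1]; exact this.2]
    · calc (1:ℝ) = ‖h y‖ := by
            simp only [hhdef, ContinuousMap.coe_mk, hk1 (Set.mem_singleton y)]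
            simp
        _ ≤ ‖h‖ := h.norm_coe_le_norm y
  set g := (Equiv.ofBijective T hbij).symm h with hgdef
  have hTg : T g = h := (Equiv.ofBijective T hbij).apply_symm_apply h
  have hid : ‖T 1 * h‖ = 1 := by
    rw [← hTg, ← h2, one_mul, hTg, hnh]
  have hup : ‖T 1 * h‖ ≤ 1 - ε := by
    rw [ContinuousMap.norm_le _ (by linarith : (0:ℝ) ≤ 1 - ε)]
    intro v
    by_cases hv : v ∈ U
    · simp only [ContinuousMap.mul_apply, norm_mul]
      have hb1 : ‖T 1 v‖ ≤ 1 - ε := le_of_lt hv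
      have hb2 : ‖h v‖ ≤ 1 := by
        simp only [hhdef, ContinuousMap.coe_mk, Complex.norm_real, Real.norm_eq_abs, abs_le]
        exact ⟨by linarith [(hk01 v).1], (hk01 v).2⟩
      calc ‖T 1 v‖ * ‖h v‖ ≤ (1-ε) * 1 := by
            apply mul_le_mul hb1 hb2 (norm_nonneg _) (by linarith)
        _ = 1 - ε := mul_one _
    · have : k v = 0 := hk0 hv
      simp only [ContinuousMap.mul_apply, norm_mul, hhdef, ContinuousMap.coe_mk, this]
      simp
      linarith
  rw [hid] at hup
  linarith

end Stmt14Aux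

variable {X Y : Type*} [TopologicalSpace X] [CompactSpace X] [T2Space X]
  [TopologicalSpace Y] [CompactSpace Y] [T2Space Y]

theorem stmt14 (T : C(X, ℂ) → C(Y, ℂ)) (hbij : Function.Bijective T)
    (h1 : ∀ f g : C(X, ℂ), ‖T (f + g)‖ = ‖T f + T g‖)
    (h2 : ∀ f g : C(X, ℂ), ‖T (f * g)‖ = ‖T f * T g‖)
    (h3 : ∀ f : C(X, ℂ), T (star f) = star (T f)) :
    Function.Surjective (fun f => T 1 * T f : C(X, ℂ) → C(Y, ℂ)) ∧
    (∀ f g : C(X, ℂ), T 1 * T (f + g) = T 1 * T f + T 1 * T g) ∧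
    (∀ (c : ℝ) (f : C(X, ℂ)), T 1 * T (c • f) = c • (T 1 * T f)) ∧
    (∀ f : C(X, ℂ), ‖T 1 * T f‖ = ‖f‖) := by
  classical
  by_cases h01 : (0 : C(X,ℂ)) = 1
  · -- degenerate case : C(X,ℂ) is trivial
    have hsubX : ∀ f g : C(X,ℂ), f = g := by
      intro f g
      have hf : f = 0 := by
        calc f = f * 1 := (mul_one f).symm
          _ = f * 0 := by rw [← h01]
          _ = 0 := mul_zero f
      have hg : g = 0 := by
        calc g = g * 1 := (mul_one g).symm
          _ = g * 0 := by rw [← h01]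
          _ = 0 := mul_zero g
      rw [hf, hg]
    have hsubY : ∀ a b : C(Y,ℂ), a = b := by
      intro a b
      have ha : T ((Equiv.ofBijective T hbij).symm a) = a :=
        (Equiv.ofBijective T hbij).apply_symm_apply a
      have hb : T ((Equiv.ofBijective T hbij).symm b) = b :=
        (Equiv.ofBijective T hbij).apply_symm_apply b
      rw [← ha, ← hb, hsubX ((Equiv.ofBijective T hbij).symm a) ((Equiv.ofBijective T hbij).symm b)]
    refine ⟨fun h => ⟨1, hsubY _ _⟩, fun f g => hsubY _ _, fun c f => hsubY _ _, fun f => ?_⟩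
    rw [hsubX f 0, hsubY (T 1 * T 0) 0]
    simp
  · -- main case
    have h01' : (0:C(X,ℂ)) ≠ 1 := h01
    have hX : Nonempty X := by
      by_contra hne
      rw [not_nonempty_iff] at hne
      exact h01 (ContinuousMap.ext (fun x => (hne.false x).elim))
    have hT0 := Stmt14Aux.Tzero T h1
    have hneg := Stmt14Aux.Tneg T h1
    have hdist := Stmt14Aux.Tdist T h1
    have hTsq := Stmt14Aux.Tsq T h2 h3
    have hdouble := Stmt14Aux.Tdouble T h1
    have hnat := Stmt14Aux.Tnat T h1
    have hTone := Stmt14Aux.ToneNorm T hbij h2 h3 hT0 h01'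
    have hconst := Stmt14Aux.Tconst T hnat hTone
    have hle := Stmt14Aux.TleSelfAdj T h1 h3 hTsq hdouble hconst
    have hleAll := Stmt14Aux.TleAll T hTsq hle
    have hphase := Stmt14Aux.Tphase T hTsq
    have hrle := Stmt14Aux.TrealLe T hX h2 hle
    have hhom := Stmt14Aux.Thom T hT0 hrle hphase
    have heval := Stmt14Aux.Teval T hbij h1 h2 hT0 hTone hdist hneg hhom
    have hnorm : ∀ f : C(X,ℂ), ‖T f‖ = ‖f‖ := by
      intro f
      refine le_antisymm (hleAll f) ?_
      rw [ContinuousMap.norm_le _ (norm_nonneg (T f))]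
      exact fun x => heval f x
    have hunimod := Stmt14Aux.Tunimod T hbij h2 hTone
    have hstar1 : star (T 1) = T 1 := by
      have := h3 1; rw [star_one] at this; exact this.symm
    have hT1sq : T 1 * T 1 = 1 := by
      ext y
      have hre := Stmt14Aux.selfAdjApply (T 1) hstar1 y
      have habs := hunimod y
      simp only [ContinuousMap.mul_apply, ContinuousMap.one_apply]
      rw [hre] at habs ⊢
      rw [Complex.norm_real, Real.norm_eq_abs] at habs
      rw [← Complex.ofReal_mul]
      have : (T 1 y).re * (T 1 y).re = 1 := by nlinarith [sq_abs ((T 1 y).re), habs]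
      rw [this]
      norm_num
    -- Mazur–Ulam
    have hisom : Isometry T := Isometry.of_dist_eq (by
      intro f g
      rw [dist_eq_norm, dist_eq_norm, hdist, hnorm])
    set e : C(X,ℂ) ≃ᵢ C(Y,ℂ) := ⟨Equiv.ofBijective T hbij, hisom⟩ with hedef
    have he0 : e 0 = 0 := hT0
    set L := e.toRealLinearIsometryEquivOfMapZero he0 with hLdef
    have hLcoe : ∀ f, L f = T f := by
      intro f
      rw [hLdef]
      have := congrFun (IsometryEquiv.coe_toRealLinearIsometryEquivOfMapZero e he0) f
      exact this
    have hadd : ∀ f g : C(X,ℂ), T (f + g) = T f + T g := by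
      intro f g
      have := map_add L f g
      simp only [hLcoe] at this
      exact this
    have hsmul : ∀ (c : ℝ) (f : C(X,ℂ)), T (c • f) = c • T f := by
      intro c f
      have := L.map_smul c f
      simp only [hLcoe] at this
      exact this
    refine ⟨?_, ?_, ?_, ?_⟩
    · intro h
      refine ⟨(Equiv.ofBijective T hbij).symm (T 1 * h), ?_⟩
      have hTs : T ((Equiv.ofBijective T hbij).symm (T 1 * h)) = T 1 * h :=
        (Equiv.ofBijective T hbij).apply_symm_apply (T 1 * h)
      simp only
      rw [hTs, ← mul_assoc, hT1sq, one_mul]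
    · intro f g
      rw [hadd, mul_add]
    · intro c f
      rw [hsmul, mul_smul_comm]
    · intro f
      rw [← h2 1 f, one_mul, hnorm]
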